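/- For all m, l ∈ ℕ, ∫_ℝ H̃_m′(x) H̃_l(x) dx = √(m/2) if l = m − 1, equals −√((m+1)/2) if l = m + 1, and equals 0 otherwise (in particular, for m = 0 the only nonzero value is −√(1/2) at l = 1). -/

import Mathlib

open MeasureTheory Real

/-- Physicists' Hermite polynomials: H_0 = 1, H_1 = 2x, H_{n+1} = 2x H_n - 2n H_{n-1}. -/
noncomputable def physHermite : ℕ → ℝ → ℝ
  | 0 => fun _ => 1
  | 1 => fun x => 2 * x
  | n + 2 => fun x => 2 * x * physHermite (n + 1) x - 2 * (n + 1) * physHermite n x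

/-- Generalized Hermite functions H̃_n(x) = π^{-1/4} (2^n n!)^{-1/2} e^{-x²/2} H_n(x). -/
noncomputable def tildeH (n : ℕ) (x : ℝ) : ℝ :=
  Real.pi ^ (-(1 / 4) : ℝ) * (Real.sqrt (2 ^ n * n.factorial))⁻¹ *
    Real.exp (-x ^ 2 / 2) * physHermite n x

lemma physHermite_succ_eq (k : ℕ) (x : ℝ) :
    physHermite (k + 1) x = 2 * x * physHermite k x - 2 * k * physHermite (k - 1) x := by
  cases k with
  | zero => simp [physHermite]
  | succ n => simp [physHermite]

lemma physHermite_succ_mul (l : ℕ) (x : ℝ) :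
    2 * x * physHermite l x = physHermite (l + 1) x + 2 * l * physHermite (l - 1) x := by
  rw [physHermite_succ_eq]; ring

lemma physHermite_hasDerivAt (n : ℕ) (x : ℝ) :
    HasDerivAt (physHermite n) (2 * n * physHermite (n - 1) x) x := by
  have key : ∀ k : ℕ, ∀ y : ℝ, (HasDerivAt (physHermite k) (2 * k * physHermite (k - 1) y) y) ∧
      HasDerivAt (physHermite (k + 1)) (2 * (k + 1) * physHermite k y) y := by
    intro k
    induction k with
    | zero =>
      intro y
      constructor
      · simpa [physHermite] using (hasDerivAt_const y (1 : ℝ))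
      · have : HasDerivAt (fun x : ℝ => 2 * x) 2 y := by
          simpa using (hasDerivAt_id y).const_mul (2 : ℝ)
        have he : physHermite 1 = fun x : ℝ => 2 * x := rfl
        rw [he]
        simpa [physHermite] using this
    | succ j ih =>
      intro y
      refine ⟨by simpa using (ih y).2, ?_⟩
      have h1 : ∀ y : ℝ, HasDerivAt (physHermite (j + 1)) (2 * (j + 1) * physHermite j y) y :=
        fun y => (ih y).2
      have h2 : ∀ y : ℝ, HasDerivAt (physHermite j) (2 * j * physHermite (j - 1) y) y :=
        fun y => (ih y).1
      have hx : HasDerivAt (fun x : ℝ => 2 * x) 2 y := by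
        simpa using (hasDerivAt_id y).const_mul (2 : ℝ)
      have hmul : HasDerivAt (fun x : ℝ => 2 * x * physHermite (j + 1) x)
          (2 * physHermite (j + 1) y + 2 * y * (2 * (j + 1) * physHermite j y)) y := by
        simpa using hx.fun_mul (h1 y)
      have hsub : HasDerivAt
          (fun x : ℝ => 2 * x * physHermite (j + 1) x - 2 * (j + 1) * physHermite j x)
          (2 * physHermite (j + 1) y + 2 * y * (2 * (j + 1) * physHermite j y)
            - 2 * (j + 1) * (2 * j * physHermite (j - 1) y)) y :=
        hmul.sub ((h2 y).const_mul (2 * ((j : ℝ) + 1)))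
      have he : physHermite (j + 2) = fun x : ℝ =>
          2 * x * physHermite (j + 1) x - 2 * (j + 1) * physHermite j x := rfl
      rw [he]  -- goal about j+1+1
      convert hsub using 1
      have hr := physHermite_succ_mul j y
      push_cast
      push_cast at hr
      nlinarith [hr]
  simpa using (key n x).1

noncomputable def PH : ℕ → Polynomial ℝ
  | 0 => 1
  | 1 => Polynomial.C 2 * Polynomial.X
  | n + 2 => Polynomial.C 2 * Polynomial.X * PH (n + 1) - Polynomial.C (2 * ((n : ℝ) + 1)) * PH n

lemma physHermite_eval : ∀ (n : ℕ) (x : ℝ), physHermite n x = (PH n).eval x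
  | 0, x => by simp [physHermite, PH]
  | 1, x => by simp [physHermite, PH]
  | n + 2, x => by
      simp [physHermite, PH, physHermite_eval (n + 1) x, physHermite_eval n x]
      try push_cast
      try ring

lemma integrable_pow_gaussian (k : ℕ) :
    Integrable fun x : ℝ => x ^ k * Real.exp (-x ^ 2) := by
  have h := integrable_rpow_mul_exp_neg_mul_sq (b := 1) one_pos
    (s := (k : ℝ)) (by exact lt_of_lt_of_le neg_one_lt_zero (Nat.cast_nonneg k))
  simpa [Real.rpow_natCast] using h

lemma integrable_poly_gaussian (p : Polynomial ℝ) :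
    Integrable fun x : ℝ => p.eval x * Real.exp (-x ^ 2) := by
  induction p using Polynomial.induction_on' with
  | add p q hp hq => simpa [add_mul] using hp.fun_add hq
  | monomial n a =>
      simpa [Polynomial.eval_monomial, mul_assoc] using (integrable_pow_gaussian n).const_mul a

lemma tendsto_poly_gaussian_atTop (p : Polynomial ℝ) :
    Filter.Tendsto (fun x : ℝ => p.eval x * Real.exp (-x ^ 2)) Filter.atTop (nhds 0) := by
  have h0 : Filter.Tendsto (fun x : ℝ => p.eval x / Real.exp x) Filter.atTop (nhds 0) :=
    p.tendsto_div_exp_atTop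
  apply squeeze_zero_norm' (a := fun x : ℝ => ‖p.eval x / Real.exp x‖)
  · filter_upwards [Filter.eventually_ge_atTop (1 : ℝ)] with x hx
    have hxx : x ≤ x ^ 2 := by nlinarith
    have he : Real.exp (-x ^ 2) ≤ Real.exp (-x) := Real.exp_le_exp.2 (by linarith)
    have : ‖p.eval x * Real.exp (-x ^ 2)‖ ≤ ‖p.eval x‖ * Real.exp (-x) := by
      rw [norm_mul]
      exact mul_le_mul_of_nonneg_left (by simpa [Real.norm_eq_abs, abs_of_pos (Real.exp_pos _)]
        using he) (norm_nonneg _)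
    calc ‖p.eval x * Real.exp (-x ^ 2)‖ ≤ ‖p.eval x‖ * Real.exp (-x) := this
      _ = ‖p.eval x / Real.exp x‖ := by
          rw [Real.exp_neg, norm_div]
          simp [Real.norm_eq_abs, abs_of_pos (Real.exp_pos x), div_eq_mul_inv]
  · simpa using h0.norm

lemma tendsto_poly_gaussian_atBot (p : Polynomial ℝ) :
    Filter.Tendsto (fun x : ℝ => p.eval x * Real.exp (-x ^ 2)) Filter.atBot (nhds 0) := by
  have h := tendsto_poly_gaussian_atTop (p.comp (-Polynomial.X))
  have h2 := h.comp Filter.tendsto_neg_atBot_atTop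
  refine h2.congr fun x => ?_
  simp [Function.comp, Polynomial.eval_comp, neg_sq]

lemma integral_deriv_zero {g g' : ℝ → ℝ} (hd : ∀ x, HasDerivAt g (g' x) x)
    (hi : Integrable g') (ht : Filter.Tendsto g Filter.atTop (nhds 0))
    (hb : Filter.Tendsto g Filter.atBot (nhds 0)) :
    ∫ x : ℝ, g' x = 0 := by
  have h1 : ∫ x in Set.Iic (0 : ℝ), g' x = g 0 - 0 :=
    integral_Iic_of_hasDerivAt_of_tendsto' (fun x _ => hd x) hi.integrableOn hb
  have h2 : ∫ x in Set.Ioi (0 : ℝ), g' x = 0 - g 0 :=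
    integral_Ioi_of_hasDerivAt_of_tendsto' (fun x _ => hd x) hi.integrableOn ht
  have := intervalIntegral.integral_Iic_add_Ioi (b := (0 : ℝ)) (f := g')
    hi.integrableOn hi.integrableOn
  rw [← this, h1, h2]; ring

lemma integrable_H (l : ℕ) :
    Integrable fun x : ℝ => physHermite l x * Real.exp (-x ^ 2) :=
  (integrable_poly_gaussian (PH l)).congr
    (Filter.EventuallyEq.of_eq (funext fun x => by rw [physHermite_eval])).symm

lemma integrable_HH (n l : ℕ) :
    Integrable fun x : ℝ => physHermite n x * physHermite l x * Real.exp (-x ^ 2) :=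
  (integrable_poly_gaussian (PH n * PH l)).congr
    (Filter.EventuallyEq.of_eq (funext fun x => by
      rw [physHermite_eval, physHermite_eval, Polynomial.eval_mul])).symm

lemma tendsto_H_atTop (l : ℕ) :
    Filter.Tendsto (fun x : ℝ => physHermite l x * Real.exp (-x ^ 2)) Filter.atTop (nhds 0) :=
  (tendsto_poly_gaussian_atTop (PH l)).congr fun x => by rw [physHermite_eval]

lemma tendsto_H_atBot (l : ℕ) :
    Filter.Tendsto (fun x : ℝ => physHermite l x * Real.exp (-x ^ 2)) Filter.atBot (nhds 0) :=
  (tendsto_poly_gaussian_atBot (PH l)).congr fun x => by rw [physHermite_eval]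

lemma hasDerivAt_HG (l : ℕ) (x : ℝ) :
    HasDerivAt (fun x : ℝ => physHermite l x * Real.exp (-x ^ 2))
      (-(physHermite (l + 1) x * Real.exp (-x ^ 2))) x := by
  have h1 : HasDerivAt (fun x : ℝ => -x ^ 2) (-(2 * x)) x := by
    simpa using (hasDerivAt_pow 2 x).fun_neg
  have h4 := (physHermite_hasDerivAt l x).fun_mul h1.exp
  refine h4.congr_deriv ?_
  rw [physHermite_succ_eq l x]
  ring

lemma integral_H_gaussian (l : ℕ) :
    (∫ x : ℝ, physHermite l x * Real.exp (-x ^ 2)) =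
      if l = 0 then Real.sqrt π else 0 := by
  cases l with
  | zero =>
      have : physHermite 0 = fun _ : ℝ => (1 : ℝ) := rfl
      rw [this]
      simpa using integral_gaussian 1
  | succ k =>
      rw [if_neg (Nat.succ_ne_zero k)]
      have h : (∫ x : ℝ, -(physHermite (k + 1) x * Real.exp (-x ^ 2))) = 0 :=
        integral_deriv_zero (hasDerivAt_HG k) ((integrable_H (k + 1)).neg)
          (tendsto_H_atTop k) (tendsto_H_atBot k)
      rw [integral_neg, neg_eq_zero] at h
      exact h

lemma Hi_eq : ∀ n l : ℕ,
    (∫ x : ℝ, physHermite n x * physHermite l x * Real.exp (-x ^ 2)) =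
      if n = l then ((2 : ℝ) ^ n * n.factorial) * Real.sqrt π else 0 := by
  have key : ∀ n : ℕ,
      (∀ l : ℕ, (∫ x : ℝ, physHermite n x * physHermite l x * Real.exp (-x ^ 2)) =
        if n = l then ((2 : ℝ) ^ n * n.factorial) * Real.sqrt π else 0) ∧
      (∀ l : ℕ, (∫ x : ℝ, physHermite (n + 1) x * physHermite l x * Real.exp (-x ^ 2)) =
        if n + 1 = l then ((2 : ℝ) ^ (n + 1) * (n + 1).factorial) * Real.sqrt π else 0) := by
    intro n
    induction n with
    | zero =>
      constructor
      · intro l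
        have h0 : physHermite 0 = fun _ : ℝ => (1 : ℝ) := rfl
        rw [h0]
        simp only [one_mul]
        rw [integral_H_gaussian l]
        by_cases hl : l = 0
        · subst hl; simp [Nat.factorial]
        · rw [if_neg hl, if_neg (fun h => hl h.symm)]
      · intro l
        have hpt : ∀ x : ℝ, physHermite (0 + 1) x * physHermite l x * Real.exp (-x ^ 2) =
            physHermite (l + 1) x * Real.exp (-x ^ 2) +
              (2 * (l : ℝ)) * (physHermite (l - 1) x * Real.exp (-x ^ 2)) := by
          intro x
          have h2 := physHermite_succ_mul l x
          have h1 : physHermite (0 + 1) x = 2 * x := rfl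
          rw [h1]
          linear_combination Real.exp (-x ^ 2) * h2
        simp only [hpt]
        rw [integral_add (integrable_H (l + 1)) ((integrable_H (l - 1)).const_mul _),
          integral_const_mul, integral_H_gaussian, integral_H_gaussian,
          if_neg (Nat.succ_ne_zero l)]
        by_cases h1 : l = 1
        · subst h1
          norm_num [Nat.factorial]
        · by_cases h0 : l = 0
          · subst h0; simp
          · rw [if_neg (by omega), if_neg (by omega)]
            ring
    | succ j ih =>
      refine ⟨ih.2, ?_⟩
      intro l
      have hpt : ∀ x : ℝ, physHermite (j + 1 + 1) x * physHermite l x * Real.exp (-x ^ 2) =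
          physHermite (j + 1) x * physHermite (l + 1) x * Real.exp (-x ^ 2) +
            (2 * (l : ℝ)) * (physHermite (j + 1) x * physHermite (l - 1) x * Real.exp (-x ^ 2)) -
            (2 * ((j : ℝ) + 1)) * (physHermite j x * physHermite l x * Real.exp (-x ^ 2)) := by
        intro x
        have h1 : physHermite (j + 2) x =
            2 * x * physHermite (j + 1) x - 2 * ((j : ℝ) + 1) * physHermite j x := rfl
        have h2 := physHermite_succ_mul l x
        rw [show j + 1 + 1 = j + 2 from rfl, h1]
        linear_combination (Real.exp (-x ^ 2) * physHermite (j + 1) x) * h2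
      simp only [hpt]
      have hadd : Integrable (fun x : ℝ =>
          physHermite (j + 1) x * physHermite (l + 1) x * Real.exp (-x ^ 2) +
            (2 * (l : ℝ)) * (physHermite (j + 1) x * physHermite (l - 1) x * Real.exp (-x ^ 2))) :=
        (integrable_HH (j + 1) (l + 1)).add ((integrable_HH (j + 1) (l - 1)).const_mul _)
      rw [integral_sub hadd ((integrable_HH j l).const_mul _),
        integral_add (integrable_HH (j + 1) (l + 1)) ((integrable_HH (j + 1) (l - 1)).const_mul _),
        integral_const_mul, integral_const_mul, ih.2 (l + 1), ih.2 (l - 1), ih.1 l]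
      by_cases hl : l = j + 2
      · subst hl
        rw [if_neg (by omega), if_pos (by omega), if_neg (by omega), if_pos rfl]
        rw [show (j + 2).factorial = (j + 2) * (j + 1).factorial from rfl]
        push_cast
        ring
      · by_cases hl2 : l = j
        · subst hl2
          rw [if_pos rfl, if_neg (by omega), if_pos rfl, if_neg (by omega)]
          rw [show (l + 1).factorial = (l + 1) * l.factorial from rfl]
          push_cast
          ring
        · rw [if_neg (by omega), if_neg (by omega), if_neg (by omega), if_neg (by omega)]
          ring
  intro n l
  exact (key n).1 l

lemma tildeH_hasDerivAt (m : ℕ) (x : ℝ) :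
    HasDerivAt (tildeH m)
      (Real.pi ^ (-(1 / 4) : ℝ) * (Real.sqrt (2 ^ m * m.factorial))⁻¹ *
        (Real.exp (-x ^ 2 / 2) *
          (2 * m * physHermite (m - 1) x - x * physHermite m x))) x := by
  have h1 : HasDerivAt (fun x : ℝ => -x ^ 2 / 2) (-x) x := by
    have h := ((hasDerivAt_pow 2 x).fun_neg).div_const 2
    refine h.congr_deriv ?_
    push_cast
    ring
  have h3 := (h1.exp).fun_mul (physHermite_hasDerivAt m x)
  have h4 := h3.const_mul
    (Real.pi ^ (-(1 / 4) : ℝ) * (Real.sqrt (2 ^ m * m.factorial))⁻¹)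
  have he : tildeH m = fun x : ℝ =>
      Real.pi ^ (-(1 / 4) : ℝ) * (Real.sqrt (2 ^ m * m.factorial))⁻¹ *
        (Real.exp (-x ^ 2 / 2) * physHermite m x) := by
    funext y
    simp only [tildeH]
    ring
  rw [he]
  refine h4.congr_deriv ?_
  ring

lemma sqrt_key (p a : ℝ) (hp : 0 < p) (ha : 0 < a) :
    (Real.sqrt a)⁻¹ * (Real.sqrt (2 * p * a))⁻¹ * (p * a) = Real.sqrt (p / 2) := by
  have hsa : (0:ℝ) < Real.sqrt a := Real.sqrt_pos.2 ha
  have h2p : (0:ℝ) < Real.sqrt (2 * p) := Real.sqrt_pos.2 (by positivity)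
  have hms : Real.sqrt a * Real.sqrt a = a := Real.mul_self_sqrt ha.le
  rw [show 2 * p * a = 2 * p * a from rfl, Real.sqrt_mul (by positivity : (0:ℝ) ≤ 2 * p) a,
    show p / 2 = p ^ 2 / (2 * p) by field_simp,
    Real.sqrt_div (by positivity) , Real.sqrt_sq hp.le]
  field_simp
  linear_combination (-1 : ℝ) * hms

lemma pi_key : Real.pi ^ (-(1 / 4) : ℝ) * Real.pi ^ (-(1 / 4) : ℝ) * Real.sqrt π = 1 := by
  rw [Real.sqrt_eq_rpow, ← Real.rpow_add Real.pi_pos, ← Real.rpow_add Real.pi_pos]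
  norm_num

open MeasureTheory in
/-- stiffness-matrix entries ∫ H̃_m' H̃_l of the Hermite–Galerkin method. -/
theorem tildeH_deriv_inner (m l : ℕ) :
    (∫ x : ℝ, deriv (tildeH m) x * tildeH l x) =
      if l + 1 = m then Real.sqrt ((m : ℝ) / 2)
      else if l = m + 1 then -Real.sqrt (((m : ℝ) + 1) / 2)
      else 0 := by

  have hpt : ∀ x : ℝ, deriv (tildeH m) x * tildeH l x =
      (Real.pi ^ (-(1 / 4) : ℝ) * (Real.sqrt (2 ^ m * m.factorial))⁻¹) *
        ((Real.pi ^ (-(1 / 4) : ℝ) * (Real.sqrt (2 ^ l * l.factorial))⁻¹) *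
          ((m : ℝ) * (physHermite (m - 1) x * physHermite l x * Real.exp (-x ^ 2)) -
            (1 / 2) * (physHermite (m + 1) x * physHermite l x * Real.exp (-x ^ 2)))) := by
    intro x
    rw [(tildeH_hasDerivAt m x).deriv]
    simp only [tildeH]
    rw [show Real.exp (-x ^ 2) = Real.exp (-x ^ 2 / 2) * Real.exp (-x ^ 2 / 2) by
      rw [← Real.exp_add]; ring_nf]
    have hrec := physHermite_succ_mul m x
    linear_combination (-(Real.pi ^ (-(1 / 4) : ℝ) * (Real.sqrt (2 ^ m * m.factorial))⁻¹ *
      (Real.pi ^ (-(1 / 4) : ℝ) * (Real.sqrt (2 ^ l * l.factorial))⁻¹) *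
      Real.exp (-x ^ 2 / 2) * Real.exp (-x ^ 2 / 2) * physHermite l x) / 2) * hrec
  simp only [hpt]
  rw [integral_const_mul, integral_const_mul,
    integral_sub ((integrable_HH (m - 1) l).const_mul _) ((integrable_HH (m + 1) l).const_mul _),
    integral_const_mul, integral_const_mul, Hi_eq, Hi_eq]
  by_cases hc1 : l + 1 = m
  · subst hc1
    rw [if_pos rfl, show l + 1 - 1 = l from rfl, if_pos rfl, if_neg (by omega : ¬l + 1 + 1 = l),
      show ((2 : ℝ) ^ (l + 1) * ((l + 1).factorial : ℝ)) =
        2 * ((l : ℝ) + 1) * ((2 : ℝ) ^ l * (l.factorial : ℝ)) by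
          rw [Nat.factorial_succ]; push_cast; ring]
    have hk := sqrt_key ((l : ℝ) + 1) ((2 : ℝ) ^ l * (l.factorial : ℝ))
      (by positivity) (by positivity)
    push_cast
    linear_combination ((Real.sqrt ((2 : ℝ) ^ l * (l.factorial : ℝ)))⁻¹ *
      (Real.sqrt (2 * ((l : ℝ) + 1) * ((2 : ℝ) ^ l * (l.factorial : ℝ))))⁻¹ *
      (((l : ℝ) + 1) * ((2 : ℝ) ^ l * (l.factorial : ℝ)))) * pi_key + hk
  · rw [if_neg hc1]
    by_cases hc2 : l = m + 1
    · subst hc2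
      rw [if_pos rfl, if_neg (by omega : ¬m - 1 = m + 1), if_pos rfl,
        show ((2 : ℝ) ^ (m + 1) * ((m + 1).factorial : ℝ)) =
          2 * ((m : ℝ) + 1) * ((2 : ℝ) ^ m * (m.factorial : ℝ)) by
            rw [Nat.factorial_succ]; push_cast; ring]
      have hk := sqrt_key ((m : ℝ) + 1) ((2 : ℝ) ^ m * (m.factorial : ℝ))
        (by positivity) (by positivity)
      linear_combination (-((Real.sqrt ((2 : ℝ) ^ m * (m.factorial : ℝ)))⁻¹ *
        (Real.sqrt (2 * ((m : ℝ) + 1) * ((2 : ℝ) ^ m * (m.factorial : ℝ))))⁻¹ *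
        (((m : ℝ) + 1) * ((2 : ℝ) ^ m * (m.factorial : ℝ))))) * pi_key - hk
    · rw [if_neg hc2, if_neg (by omega : ¬m + 1 = l)]
      by_cases hm0 : m = 0
      · subst hm0
        simp
      · rw [if_neg (by omega : ¬m - 1 = l)]
        ring
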